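/- Let H be a 4-graph, and for each vertex w ∈ V(H) let I_w⁰, I_w¹ ⊆ V(H) be critical subsets not containing w (i.e., α(H − I_wⁱ) < α(H)). Construct the expansion 𝓗 as in the paper (blow-up with replacement hypergraphs (V_w, E_w) of independence number 3 + d(w), cross edges E₁₁₁₁ over edges of H, all balanced 2+2 quadruples E₂₂, and parity-guided 3+1 quadruples E₃₁ using the parity function i(a,b,c)). Then α(𝓗) ≤ α(H) + 1. -/

import Mathlib

open Finset

/-- Independence number of the hypergraph with edge set `E`, restricted to the
induced subgraph on the vertex set `S`. -/
noncomputable def indepNumOn {V : Type} [Fintype V] [DecidableEq V]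
    (E : Finset (Finset V)) (S : Finset V) : ℕ :=
  (S.powerset.filter fun A => ∀ e ∈ E, ¬ e ⊆ A).sup Finset.card

/-- The edge predicate of the expansion `𝓗` of a 4-graph `H = (V, EH)`, where the
vertex `w` of `H` is blown up into the replacement hypergraph `(U w, Ew w)`, and
`iF w t` is the parity of a triple `t ⊆ U w`.  The edges are: `E₁₁₁₁` (one vertex
above each vertex of an edge of `H`), `E₂₂` (two vertices above each of two distinct
vertices of `H`), `E₃₁` (a triple `t` above `w` together with one vertex above some
vertex of the critical set `I_w^{iF w t}`), and the blown-up edges `Ew`. -/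
def IsExpEdge {V : Type} [DecidableEq V] {U : V → Type} [∀ w, DecidableEq (U w)]
    (EH : Finset (Finset V)) (I0 I1 : V → Finset V)
    (Ew : ∀ w, Finset (Finset (U w))) (iF : ∀ w, Finset (U w) → Fin 2)
    (e : Finset (Σ w, U w)) : Prop :=
  -- E₁₁₁₁
  (e.card = 4 ∧ (e.image Sigma.fst).card = 4 ∧ e.image Sigma.fst ∈ EH) ∨
  -- E₂₂
  (∃ (x y : V), x ≠ y ∧ ∃ (a b : U x) (c d : U y), a ≠ b ∧ c ≠ d ∧
    e = {⟨x, a⟩, ⟨x, b⟩, ⟨y, c⟩, ⟨y, d⟩}) ∨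
  -- E₃₁
  (∃ (w : V) (t : Finset (U w)) (x : V) (u : U x),
    t.card = 3 ∧ x ∈ (if iF w t = 0 then I0 w else I1 w) ∧
    e = t.image (fun a => (⟨w, a⟩ : Σ w, U w)) ∪ {⟨x, u⟩}) ∨
  -- blown-up edges E_w
  (∃ (w : V) (b : Finset (U w)), b ∈ Ew w ∧
    e = b.image fun a => (⟨w, a⟩ : Σ w, U w))


lemma indep_lower {V : Type} [Fintype V] [DecidableEq V]
    (E : Finset (Finset V)) (S C : Finset V) (h1 : C ⊆ S)
    (h2 : ∀ e ∈ E, ¬ e ⊆ C) : C.card ≤ indepNumOn E S :=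
  Finset.le_sup (Finset.mem_filter.mpr ⟨Finset.mem_powerset.mpr h1, h2⟩)

lemma fin2cases (i : Fin 2) : i = 0 ∨ i = 1 := by
  match i with
  | 0 => exact Or.inl rfl
  | 1 => exact Or.inr rfl

theorem stmt_7
    {V : Type} [Fintype V] [DecidableEq V]
    (EH : Finset (Finset V)) (hEH : ∀ e ∈ EH, e.card = 4)
    (U : V → Type) [∀ w, Fintype (U w)] [∀ w, DecidableEq (U w)]
    (I0 I1 : V → Finset V) (d : V → ℕ)
    (hI0 : ∀ w, w ∉ I0 w) (hI1 : ∀ w, w ∉ I1 w)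
    -- the sets `I_w^0`, `I_w^1` are critical
    (hcrit0 : ∀ w, indepNumOn EH (I0 w)ᶜ < indepNumOn EH Finset.univ)
    (hcrit1 : ∀ w, indepNumOn EH (I1 w)ᶜ < indepNumOn EH Finset.univ)
    -- `d w = 1` if removing `I_w^0 ∪ I_w^1` decreases the independence number by 2
    (hd01 : ∀ w, d w ≤ 1)
    (hd : ∀ w, d w = 1 →
      indepNumOn EH (I0 w ∪ I1 w)ᶜ + 2 ≤ indepNumOn EH Finset.univ)
    -- replacement hypergraphs `(U w, Ew w)` with independence number `3 + d w`
    (Ew : ∀ w, Finset (Finset (U w)))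
    (hEw4 : ∀ w, ∀ b ∈ Ew w, b.card = 4)
    (hEwα : ∀ w, ∀ S : Finset (U w), S.card = 4 + d w → ∃ b ∈ Ew w, b ⊆ S)
    -- parity function on triples: all triples are even when `d w = 0`, and when
    -- `d w = 1` every non-edge quadruple contains an even and an odd triple
    (iF : ∀ w, Finset (U w) → Fin 2)
    (hiF0 : ∀ w, d w = 0 → ∀ t, iF w t = 0)
    (hiF1 : ∀ w, d w = 1 → ∀ Q : Finset (U w), Q.card = 4 →
      (¬ ∃ b ∈ Ew w, b ⊆ Q) →
      ∃ t0 ⊆ Q, ∃ t1 ⊆ Q, t0.card = 3 ∧ t1.card = 3 ∧ iF w t0 = 0 ∧ iF w t1 = 1)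
    (A : Finset (Σ w, U w))
    (hA : ∀ e : Finset (Σ w, U w), IsExpEdge EH I0 I1 Ew iF e → ¬ e ⊆ A) :
    A.card ≤ indepNumOn EH Finset.univ + 1 := by
  classical
  set α := indepNumOn EH Finset.univ with hα
  set Sw : ∀ w : V, Finset (U w) :=
    fun w => Finset.univ.filter (fun u => (⟨w, u⟩ : Σ w, U w) ∈ A) with hSw
  have hSwmem : ∀ (w : V) (u : U w), u ∈ Sw w ↔ (⟨w, u⟩ : Σ w, U w) ∈ A := by
    intro w u; simp [hSw]
  -- L1 : the projection of A contains no edge of H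
  have L1 : ∀ e ∈ EH, ¬ e ⊆ A.image Sigma.fst := by
    intro e he hsub
    have hc4 := hEH e he
    have hch : ∀ w ∈ e, ∃ p : Σ w, U w, p ∈ A ∧ p.1 = w := by
      intro w hw
      obtain ⟨p, hp, hpe⟩ := Finset.mem_image.mp (hsub hw)
      exact ⟨p, hp, hpe⟩
    choose g hg1 hg2 using hch
    set e' : Finset (Σ w, U w) := e.attach.image (fun x => g x.1 x.2) with he'
    have h1 : e'.image Sigma.fst = e := by
      ext w
      simp only [he', Finset.image_image, Finset.mem_image, Finset.mem_attach,
        true_and, Subtype.exists, Function.comp]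
      constructor
      · rintro ⟨x, hx, rfl⟩
        rw [hg2 x hx]; exact hx
      · intro hw; exact ⟨w, hw, hg2 w hw⟩
    have hsubA : e' ⊆ A := by
      intro p hp
      obtain ⟨x, _, rfl⟩ := Finset.mem_image.mp hp
      exact hg1 x.1 x.2
    have hcard : e'.card = 4 := by
      have h2 : e'.card ≤ 4 := by
        calc e'.card ≤ e.attach.card := Finset.card_image_le
        _ = 4 := by rw [Finset.card_attach, hc4]
      have h3 : 4 ≤ e'.card := by
        calc 4 = (e'.image Sigma.fst).card := by rw [h1, hc4]
        _ ≤ e'.card := Finset.card_image_le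
      omega
    exact hA e' (Or.inl ⟨hcard, by rw [h1]; exact hc4, by rw [h1]; exact he⟩) hsubA
  -- E₂₂ : at most one fat fiber
  have L22 : ∀ x y : V, x ≠ y → 2 ≤ (Sw x).card → 2 ≤ (Sw y).card → False := by
    intro x y hxy hx hy
    obtain ⟨a, ha, b, hb, hab⟩ := Finset.one_lt_card.mp hx
    obtain ⟨c, hc, e, hce, hcd⟩ := Finset.one_lt_card.mp hy
    refine hA {⟨x, a⟩, ⟨x, b⟩, ⟨y, c⟩, ⟨y, e⟩}
      (Or.inr (Or.inl ⟨x, y, hxy, a, b, c, e, hab, hcd, rfl⟩)) ?_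
    intro p hp
    simp only [Finset.mem_insert, Finset.mem_singleton] at hp
    rcases hp with rfl | rfl | rfl | rfl
    · exact (hSwmem x a).mp ha
    · exact (hSwmem x b).mp hb
    · exact (hSwmem y c).mp hc
    · exact (hSwmem y e).mp hce
  by_cases hbig : ∃ w, 2 ≤ (Sw w).card
  · obtain ⟨w0, hw0⟩ := hbig
    have hsmall : ∀ x : V, x ≠ w0 → (Sw x).card ≤ 1 := by
      intro x hx
      by_contra h
      exact L22 x w0 hx (by omega) hw0
    set A' : Finset (Σ w, U w) := A.filter (fun p => ¬ p.1 = w0) with hA'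
    set B' : Finset V := A'.image Sigma.fst with hB'
    -- card A = card A' + card (Sw w0)
    have hfib : A.filter (fun p => p.1 = w0) = (Sw w0).image (Sigma.mk w0) := by
      ext p
      simp only [Finset.mem_filter, Finset.mem_image]
      constructor
      · rintro ⟨hp, h1⟩
        obtain ⟨w, u⟩ := p
        cases h1
        exact ⟨u, (hSwmem _ u).mpr hp, rfl⟩
      · rintro ⟨u, hu, rfl⟩
        exact ⟨(hSwmem w0 u).mp hu, rfl⟩
    have hsplit : A.card = A'.card + (Sw w0).card := by
      have := Finset.card_filter_add_card_filter_not
        (s := A) (p := fun p => p.1 = w0)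
      rw [hfib, Finset.card_image_of_injective _ sigma_mk_injective] at this
      rw [hA']
      omega
    -- card A' = card B'
    have hinj : Set.InjOn (Sigma.fst : (Σ w, U w) → V) ↑A' := by
      intro p hp q hq hpq
      simp only [hA', Finset.coe_filter, Set.mem_setOf_eq] at hp hq
      obtain ⟨w, u⟩ := p
      obtain ⟨w', v⟩ := q
      simp only at hpq
      cases hpq
      have hu : u ∈ Sw w := (hSwmem w u).mpr hp.1
      have hv : v ∈ Sw w := (hSwmem w v).mpr hq.1
      have := Finset.card_le_one.mp (hsmall w hp.2) u hu v hv
      rw [this]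
    have hcardA' : B'.card = A'.card := Finset.card_image_of_injOn hinj
    have hw0B' : w0 ∉ B' := by
      intro h
      obtain ⟨p, hp, hpe⟩ := Finset.mem_image.mp h
      exact (Finset.mem_filter.mp hp).2 hpe
    -- insert w0 B' contains no edge of H
    have hins : insert w0 B' ⊆ A.image Sigma.fst := by
      intro x hx
      rcases Finset.mem_insert.mp hx with rfl | hx
      · obtain ⟨u, hu⟩ := Finset.card_pos.mp (by omega : 0 < (Sw x).card)
        exact Finset.mem_image.mpr ⟨⟨x, u⟩, (hSwmem x u).mp hu, rfl⟩
      · exact Finset.image_subset_image (Finset.filter_subset _ _) (hB' ▸ hx)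
    have hnoe : ∀ e ∈ EH, ¬ e ⊆ insert w0 B' :=
      fun e he hsub => L1 e he (hsub.trans hins)
    have hcardins : (insert w0 B').card = B'.card + 1 :=
      Finset.card_insert_of_notMem hw0B'
    -- E₃₁ constraints
    have L31 : ∀ t ⊆ Sw w0, t.card = 3 →
        ∀ x ∈ (if iF w0 t = 0 then I0 w0 else I1 w0), x ∉ B' := by
      intro t ht ht3 x hx hxB
      obtain ⟨p, hp, hpe⟩ := Finset.mem_image.mp hxB
      obtain ⟨w, u⟩ := p
      cases hpe
      refine hA (t.image (fun a => (⟨w0, a⟩ : Σ w, U w)) ∪ {⟨w, u⟩})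
        (Or.inr (Or.inr (Or.inl ⟨w0, t, w, u, ht3, hx, rfl⟩))) ?_
      intro p hp'
      rcases Finset.mem_union.mp hp' with hp' | hp'
      · obtain ⟨a, ha, rfl⟩ := Finset.mem_image.mp hp'
        exact (hSwmem w0 a).mp (ht ha)
      · rw [Finset.mem_singleton.mp hp']
        exact (Finset.mem_filter.mp hp).1
    -- no blow-up edge inside the fat fiber
    have Lblow : ¬ ∃ b ∈ Ew w0, b ⊆ Sw w0 := by
      rintro ⟨b, hb, hbS⟩
      refine hA (b.image (fun a => (⟨w0, a⟩ : Σ w, U w)))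
        (Or.inr (Or.inr (Or.inr ⟨w0, b, hb, rfl⟩))) ?_
      intro p hp
      obtain ⟨a, ha, rfl⟩ := Finset.mem_image.mp hp
      exact (hSwmem w0 a).mp (hbS ha)
    have hSle : (Sw w0).card ≤ 3 + d w0 := by
      by_contra h
      obtain ⟨T, hT, hTc⟩ := Finset.exists_subset_card_eq (show 4 + d w0 ≤ (Sw w0).card by omega)
      obtain ⟨b, hb, hbT⟩ := hEwα w0 T hTc
      exact Lblow ⟨b, hb, hbT.trans hT⟩
    have hd0 := hd01 w0
    -- case on fiber size
    rcases (by omega : (Sw w0).card = 2 ∨ (Sw w0).card = 3 ∨ (Sw w0).card = 4)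
      with h2 | h3 | h4
    · have := indep_lower EH Finset.univ (insert w0 B')
        (Finset.subset_univ _) hnoe
      omega
    · rcases fin2cases (iF w0 (Sw w0)) with hi | hi
      · have hL := L31 (Sw w0) Finset.Subset.rfl h3
        rw [hi] at hL
        simp only [if_pos rfl] at hL
        have hsub : insert w0 B' ⊆ (I0 w0)ᶜ := by
          intro x hx
          rw [Finset.mem_compl]
          rcases Finset.mem_insert.mp hx with rfl | hx
          · exact hI0 x
          · exact fun h => hL x h hx
        have := indep_lower EH (I0 w0)ᶜ (insert w0 B') hsub hnoe
        have := hcrit0 w0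
        omega
      · have hL := L31 (Sw w0) Finset.Subset.rfl h3
        rw [hi] at hL
        simp only [if_neg (by decide : (1 : Fin 2) ≠ 0)] at hL
        have hsub : insert w0 B' ⊆ (I1 w0)ᶜ := by
          intro x hx
          rw [Finset.mem_compl]
          rcases Finset.mem_insert.mp hx with rfl | hx
          · exact hI1 x
          · exact fun h => hL x h hx
        have := indep_lower EH (I1 w0)ᶜ (insert w0 B') hsub hnoe
        have := hcrit1 w0
        omega
    · have hdw : d w0 = 1 := by omega
      obtain ⟨t0, ht0S, t1, ht1S, ht0c, ht1c, hp0, hp1⟩ :=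
        hiF1 w0 hdw (Sw w0) h4 Lblow
      have hL0 := L31 t0 ht0S ht0c
      rw [hp0] at hL0
      simp only [if_pos rfl] at hL0
      have hL1 := L31 t1 ht1S ht1c
      rw [hp1] at hL1
      simp only [if_neg (by decide : (1 : Fin 2) ≠ 0)] at hL1
      have hsub : insert w0 B' ⊆ (I0 w0 ∪ I1 w0)ᶜ := by
        intro x hx
        rw [Finset.mem_compl, Finset.mem_union]
        rcases Finset.mem_insert.mp hx with rfl | hx
        · rintro (h | h)
          · exact hI0 x h
          · exact hI1 x h
        · rintro (h | h)
          · exact hL0 x h hx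
          · exact hL1 x h hx
      have := indep_lower EH (I0 w0 ∪ I1 w0)ᶜ (insert w0 B') hsub hnoe
      have := hd w0 hdw
      omega
  · -- all fibers small: projection is injective on A
    push_neg at hbig
    have hinj : Set.InjOn (Sigma.fst : (Σ w, U w) → V) ↑A := by
      intro p hp q hq hpq
      obtain ⟨w, u⟩ := p
      obtain ⟨w', v⟩ := q
      simp only at hpq
      cases hpq
      have hu : u ∈ Sw w := (hSwmem w u).mpr hp
      have hv : v ∈ Sw w := (hSwmem w v).mpr hq
      have := Finset.card_le_one.mp (by have := hbig w; omega) u hu v hv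
      rw [this]
    have h1 : A.card = (A.image Sigma.fst).card :=
      (Finset.card_image_of_injOn hinj).symm
    have h2 := indep_lower EH Finset.univ (A.image Sigma.fst)
      (Finset.subset_univ _) L1
    omega
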